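/- (Construction of a simple evolution leading to a given faithful state.) Let ρ be a positive definite n×n complex matrix of trace 1 that is not the maximally mixed state (ρ ≠ 𝟙/n). Then there exists an indecomposable n×n complex matrix h such that for every density matrix σ, D_h(σ) = 0 if and only if σ = ρ; i.e. there is a simple Lindblad evolution having ρ as its unique stationary state. -/

import Mathlib

open Matrix
open scoped ComplexOrder

/-- The simple Lindblad generator `D_h`. -/
noncomputable def lindblad {n : ℕ} (h ρ : Matrix (Fin n) (Fin n) ℂ) :
    Matrix (Fin n) (Fin n) ℂ :=
  h * ρ * hᴴ - (1 / 2 : ℂ) • (hᴴ * h * ρ + ρ * (hᴴ * h))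

/-- A matrix is indecomposable if the only orthogonal projections commuting with it
are `0` and `1`. -/
def Indecomposable {n : ℕ} (h : Matrix (Fin n) (Fin n) ℂ) : Prop :=
  ∀ P : Matrix (Fin n) (Fin n) ℂ, P = Pᴴ → P * P = P → P * h = h * P → P = 0 ∨ P = 1

open Fin.NatCast
section core
variable {n : ℕ} [NeZero n]

/-- weights -/
noncomputable def cw (p : Fin n → ℝ) (i : Fin n) : ℝ := (Real.sqrt (p i))⁻¹

/-- the weighted cyclic shift -/
noncomputable def HH (p : Fin n → ℝ) : Matrix (Fin n) (Fin n) ℂ :=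
  Matrix.of fun a b => if a = b + 1 then ((cw p b : ℝ) : ℂ) else 0

variable {p : Fin n → ℝ}
set_option linter.unusedSectionVars false

lemma cw_pos (hp : ∀ i, 0 < p i) (i : Fin n) : 0 < cw p i := by
  simp [cw, Real.sqrt_pos.2 (hp i)]

lemma cw_sq (hp : ∀ i, 0 < p i) (i : Fin n) : cw p i * cw p i = (p i)⁻¹ := by
  rw [cw, ← mul_inv, Real.mul_self_sqrt (hp i).le]

lemma HH_mul_apply (X : Matrix (Fin n) (Fin n) ℂ) (i j : Fin n) :
    (HH p * X) (i + 1) j = (cw p i : ℂ) * X i j := by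
  rw [mul_apply]
  rw [Finset.sum_eq_single i]
  · simp [HH]
  · intro b _ hb
    have : ¬ (i + 1 = b + 1) := by simpa [add_left_inj] using (Ne.symm hb)
    simp [HH, this]
  · simp

lemma mul_HHT_apply (X : Matrix (Fin n) (Fin n) ℂ) (i j : Fin n) :
    (X * (HH p)ᴴ) i (j + 1) = (cw p j : ℂ) * X i j := by
  rw [mul_apply]
  rw [Finset.sum_eq_single j]
  · simp [HH, conjTranspose_apply, mul_comm]
  · intro b _ hb
    have : ¬ (j + 1 = b + 1) := by simpa [add_left_inj] using (Ne.symm hb)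
    simp [HH, conjTranspose_apply, this]
  · simp

lemma HHT_mul_HH (hp : ∀ i, 0 < p i) :
    (HH p)ᴴ * HH p = diagonal (fun i => (((p i)⁻¹ : ℝ) : ℂ)) := by
  ext i j
  rw [mul_apply, Finset.sum_eq_single (i + 1)]
  · by_cases h : i = j
    · subst h
      simp [HH, conjTranspose_apply, diagonal_apply_eq, ← Complex.ofReal_mul, cw_sq hp]
    · have : ¬ (i + 1 = j + 1) := by simpa [add_left_inj] using h
      simp [HH, conjTranspose_apply, this, diagonal_apply_ne _ h]
  · intro b _ hb
    have : ¬ (b = i + 1) := hb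
    simp [HH, conjTranspose_apply, this]
  · simp

lemma HH_diag_HHT (hp : ∀ i, 0 < p i) :
    HH p * diagonal (fun i => ((p i : ℝ) : ℂ)) * (HH p)ᴴ = 1 := by
  ext i j
  obtain ⟨i', rfl⟩ : ∃ i', i = i' + 1 := ⟨i - 1, (sub_add_cancel i 1).symm⟩
  obtain ⟨j', rfl⟩ : ∃ j', j = j' + 1 := ⟨j - 1, (sub_add_cancel j 1).symm⟩
  rw [mul_HHT_apply, mul_diagonal]
  by_cases h : i' = j'
  · subst h
    simp only [HH, of_apply, if_pos rfl, if_true, one_apply_eq]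
    rw [← Complex.ofReal_mul, ← Complex.ofReal_mul, ← Complex.ofReal_one]
    congr 1
    rw [← mul_assoc, cw_sq hp, inv_mul_cancel₀ (hp i').ne']
  · have h2 : ¬ (i' + 1 = j' + 1) := by simpa [add_left_inj] using h
    simp [HH, h2, one_apply, h2]
end core

section core2
variable {n : ℕ} [NeZero n] {p : Fin n → ℝ}
set_option linter.unusedSectionVars false

lemma lind_entry (hp : ∀ i, 0 < p i) (σ : Matrix (Fin n) (Fin n) ℂ) (i j : Fin n) :
    (lindblad (HH p) σ) (i + 1) (j + 1) =
      (cw p j : ℂ) * ((cw p i : ℂ) * σ i j) -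
      (1 / 2 : ℂ) * ((((p (i+1))⁻¹ : ℝ) : ℂ) * σ (i+1) (j+1) + σ (i+1) (j+1) * (((p (j+1))⁻¹ : ℝ) : ℂ)) := by
  have h1 : (HH p * σ * (HH p)ᴴ) (i + 1) (j + 1) = (cw p j : ℂ) * ((cw p i : ℂ) * σ i j) := by
    rw [mul_HHT_apply, HH_mul_apply]
  have h2 : ((HH p)ᴴ * HH p * σ) (i + 1) (j + 1) = (((p (i+1))⁻¹ : ℝ) : ℂ) * σ (i+1) (j+1) := by
    rw [HHT_mul_HH hp, diagonal_mul]
  have h3 : (σ * ((HH p)ᴴ * HH p)) (i + 1) (j + 1) = σ (i+1) (j+1) * (((p (j+1))⁻¹ : ℝ) : ℂ) := by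
    rw [HHT_mul_HH hp, mul_diagonal]
  simp only [lindblad, Matrix.sub_apply, Matrix.smul_apply, Matrix.add_apply, h1, h2, h3, smul_eq_mul]

lemma lind_diag_zero (hp : ∀ i, 0 < p i) :
    lindblad (HH p) (diagonal (fun i => ((p i : ℝ) : ℂ))) = 0 := by
  have hd : diagonal (fun i => (((p i)⁻¹ : ℝ) : ℂ)) * diagonal (fun i => ((p i : ℝ) : ℂ)) = 1 := by
    rw [diagonal_mul_diagonal]
    have : (fun i => (((p i)⁻¹ : ℝ) : ℂ) * ((p i : ℝ) : ℂ)) = fun _ => (1 : ℂ) := by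
      funext i
      rw [← Complex.ofReal_mul, inv_mul_cancel₀ (hp i).ne', Complex.ofReal_one]
    rw [this, diagonal_one]
  have hd2 : diagonal (fun i => ((p i : ℝ) : ℂ)) * diagonal (fun i => (((p i)⁻¹ : ℝ) : ℂ)) = 1 := by
    rw [diagonal_mul_diagonal]
    have : (fun i => ((p i : ℝ) : ℂ) * (((p i)⁻¹ : ℝ) : ℂ)) = fun _ => (1 : ℂ) := by
      funext i
      rw [← Complex.ofReal_mul, mul_inv_cancel₀ (hp i).ne', Complex.ofReal_one]
    rw [this, diagonal_one]
  rw [lindblad, HH_diag_HHT hp, HHT_mul_HH hp, hd, hd2]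
  rw [show ((1:Matrix (Fin n) (Fin n) ℂ) + 1) = (2:ℂ) • 1 by rw [two_smul]]
  rw [smul_smul]
  norm_num

/-- AM-GM -/
lemma amgm_lt (a b : ℝ) (ha : 0 < a) (hb : 0 < b) (hab : a ≠ b) :
    2 * Real.sqrt a * Real.sqrt b / (a + b) < 1 := by
  rw [div_lt_one (by linarith)]
  have h1 : Real.sqrt a ≠ Real.sqrt b := fun h => hab (by
    have := congrArg (fun x => x ^ 2) h
    simpa [Real.sq_sqrt ha.le, Real.sq_sqrt hb.le] using this)
  have h2 : (0:ℝ) < (Real.sqrt a - Real.sqrt b) ^ 2 := by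
    have := sub_ne_zero.2 h1
    positivity
  nlinarith [Real.sq_sqrt ha.le, Real.sq_sqrt hb.le]

lemma amgm_le (a b : ℝ) (ha : 0 < a) (hb : 0 < b) :
    2 * Real.sqrt a * Real.sqrt b / (a + b) ≤ 1 := by
  rw [div_le_one (by linarith)]
  nlinarith [Real.sq_sqrt ha.le, Real.sq_sqrt hb.le, sq_nonneg (Real.sqrt a - Real.sqrt b)]

/-- monotone + cyclically periodic implies constant -/
lemma aperiodic (hmono : Monotone p) (d : Fin n) (hper : ∀ k, p (k + d) = p k)
    (hd : d ≠ 0) : ∀ k : Fin n, p k = p 0 := by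
  have hd0 : 0 < d.val := Nat.pos_of_ne_zero (fun h => hd (Fin.ext h))
  have hbase : ∀ k : Fin n, k ≤ d → p k = p 0 := by
    intro k hk
    have h1 : p 0 ≤ p k := hmono (Fin.zero_le k)
    have h2 : p k ≤ p d := hmono hk
    have h3 : p d = p 0 := by simpa using hper 0
    linarith
  suffices H : ∀ m : ℕ, ∀ k : Fin n, k.val = m → p k = p 0 by
    exact fun k => H k.val k rfl
  intro m
  induction m using Nat.strong_induction_on with
  | _ m ih =>
    intro k hk
    by_cases hkd : k ≤ d
    · exact hbase k hkd
    · push_neg at hkd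
      have hdk : d ≤ k := le_of_lt hkd
      have hv : (k - d).val = k.val - d.val := by rw [Fin.coe_sub_iff_le.2 hdk]
      have hlt : (k - d).val < k.val := by
        rw [hv]
        have : d.val ≤ k.val := hdk
        omega
      have := hper (k - d)
      rw [sub_add_cancel] at this
      rw [this]
      exact ih _ (hk ▸ hlt) _ rfl
end core2

section core3
variable {n : ℕ} [NeZero n] {p : Fin n → ℝ}
set_option linter.unusedSectionVars false

lemma key_rec (hp : ∀ i, 0 < p i) {σ : Matrix (Fin n) (Fin n) ℂ}
    (hL : lindblad (HH p) σ = 0) (i j : Fin n) :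
    σ (i+1) (j+1) =
      ((2 * cw p i * cw p j / ((p (i+1))⁻¹ + (p (j+1))⁻¹) : ℝ) : ℂ) * σ i j := by
  have h0 : (lindblad (HH p) σ) (i+1) (j+1) = 0 := by rw [hL]; rfl
  rw [lind_entry hp] at h0
  have hden : (0:ℝ) < (p (i+1))⁻¹ + (p (j+1))⁻¹ := by
    have := hp (i+1); have := hp (j+1); positivity
  have hdenC : (((p (i+1))⁻¹ + (p (j+1))⁻¹ : ℝ) : ℂ) ≠ 0 :=
    Complex.ofReal_ne_zero.2 hden.ne'
  have e2 : σ (i+1) (j+1) * (((p (i+1))⁻¹ + (p (j+1))⁻¹ : ℝ) : ℂ) =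
      ((2 * cw p i * cw p j : ℝ) : ℂ) * σ i j := by
    push_cast
    push_cast at h0
    linear_combination (-2:ℂ) * h0
  rw [Complex.ofReal_div, div_mul_eq_mul_div, eq_div_iff hdenC]
  exact e2

theorem core_unique (hp : ∀ i, 0 < p i) (hmono : Monotone p) (hsum : ∑ i, p i = 1)
    (hnc : ¬ ∀ k, p k = p 0) (σ : Matrix (Fin n) (Fin n) ℂ) (htrσ : σ.trace = 1)
    (hL : lindblad (HH p) σ = 0) : σ = diagonal (fun i => ((p i : ℝ) : ℂ)) := by
  -- diagonal entries
  have diag1 : ∀ i : Fin n, (((p (i+1))⁻¹:ℝ):ℂ) * σ (i+1) (i+1) = (((p i)⁻¹:ℝ):ℂ) * σ i i := by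
    intro i
    rw [key_rec hp hL i i]
    have hr : (p (i+1))⁻¹ * (2 * cw p i * cw p i / ((p (i+1))⁻¹ + (p (i+1))⁻¹)) = (p i)⁻¹ := by
      have h2 : 2 * cw p i * cw p i = 2 * (p i)⁻¹ := by
        rw [mul_assoc, cw_sq hp]
      rw [h2]
      have h4 : (p (i+1))⁻¹ ≠ 0 := inv_ne_zero (hp _).ne'
      rw [show (p (i+1))⁻¹ + (p (i+1))⁻¹ = 2 * (p (i+1))⁻¹ from by ring]
      rw [mul_div_mul_left _ _ (two_ne_zero)]
      rw [mul_comm, div_mul_cancel₀ _ h4]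
    rw [← mul_assoc, ← Complex.ofReal_mul, hr]
  have fconst : ∀ k : Fin n, (((p k)⁻¹:ℝ):ℂ) * σ k k = (((p 0)⁻¹:ℝ):ℂ) * σ 0 0 := by
    have hm : ∀ m : ℕ, (((p (m:Fin n))⁻¹:ℝ):ℂ) * σ (m:Fin n) (m:Fin n) =
        (((p 0)⁻¹:ℝ):ℂ) * σ 0 0 := by
      intro m
      induction m with
      | zero => norm_num
      | succ m ih =>
        rw [Nat.cast_succ, diag1]
        exact ih
    intro k
    have := hm k.val
    rwa [Fin.cast_val_eq_self] at this
  have hdiagval : ∀ k : Fin n, σ k k = ((p k : ℝ):ℂ) * ((((p 0)⁻¹:ℝ):ℂ) * σ 0 0) := by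
    intro k
    have h1 := fconst k
    have h2 : ((p k : ℝ):ℂ) ≠ 0 := Complex.ofReal_ne_zero.2 (hp k).ne'
    have h3 : (((p k)⁻¹:ℝ):ℂ) = (((p k):ℝ):ℂ)⁻¹ := by push_cast; ring
    rw [h3] at h1
    field_simp at h1
    rw [h1]
    rw [show (((p 0)⁻¹:ℝ):ℂ) = (((p 0):ℝ):ℂ)⁻¹ from by push_cast; ring]
    have h4 : ((p 0 : ℝ):ℂ) ≠ 0 := Complex.ofReal_ne_zero.2 (hp 0).ne'
    field_simp
    push_cast; field_simp
  have hs : (((p 0)⁻¹:ℝ):ℂ) * σ 0 0 = 1 := by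
    have ht : σ.trace = (∑ k, ((p k:ℝ):ℂ)) * ((((p 0)⁻¹:ℝ):ℂ) * σ 0 0) := by
      rw [Matrix.trace]
      rw [Finset.sum_mul]
      congr 1
      funext k
      exact hdiagval k
    have hsum' : (∑ k, ((p k:ℝ):ℂ)) = 1 := by
      push_cast [← Complex.ofReal_sum]
      exact_mod_cast congrArg (Complex.ofReal) hsum
    rw [hsum', one_mul] at ht
    rw [← ht, htrσ]
  have hdiag : ∀ k : Fin n, σ k k = ((p k : ℝ):ℂ) := by
    intro k
    rw [hdiagval k, hs, mul_one]
  -- off-diagonal entries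
  have hoff : ∀ i j : Fin n, i ≠ j → σ i j = 0 := by
    intro i j hij
    set d := j - i with hdd
    have hdne : d ≠ 0 := sub_ne_zero.2 (Ne.symm hij)
    have hex : ∃ x : Fin n, p (x + d) ≠ p x := by
      by_contra hall
      push_neg at hall
      exact hnc (aperiodic hmono d hall hdne)
    obtain ⟨x₀, hx₀⟩ := hex
    set N : Fin n → ℝ := fun x => 2 * cw p (i + x) * cw p (j + x) with hN
    set Dn : Fin n → ℝ := fun x => (p (i + x))⁻¹ + (p (j + x))⁻¹ with hDn
    set g : ℕ → ℂ := fun m => σ (i + (m:Fin n)) (j + (m:Fin n)) with hg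
    have step : ∀ m : ℕ, g (m+1) = ((N (m:Fin n) / Dn ((m:Fin n)+1) : ℝ):ℂ) * g m := by
      intro m
      have hk := key_rec hp hL (i + (m:Fin n)) (j + (m:Fin n))
      have e1 : (i + ((m+1 : ℕ):Fin n)) = (i + (m:Fin n)) + 1 := by
        rw [Nat.cast_succ, ← add_assoc]
      have e2 : (j + ((m+1 : ℕ):Fin n)) = (j + (m:Fin n)) + 1 := by
        rw [Nat.cast_succ, ← add_assoc]
      simp only [hg, e1, e2]
      rw [hk]
      simp only [hN, hDn, add_assoc]
    have prodf : ∀ M : ℕ, g M =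
        ((∏ m ∈ Finset.range M, (N (m:Fin n) / Dn ((m:Fin n)+1)) : ℝ) : ℂ) * g 0 := by
      intro M
      induction M with
      | zero => simp
      | succ M ih =>
        rw [step M, ih, Finset.prod_range_succ]
        push_cast
        ring
    -- the product over a full cycle
    have hgn : g n = g 0 := by
      simp only [hg, Fin.natCast_self, Nat.cast_zero, add_zero]
    set F : ℝ := ∏ m ∈ Finset.range n, (N (m:Fin n) / Dn ((m:Fin n)+1)) with hF
    -- rewrite F as product over Fin n of N x / Dn x
    have hF2 : F = ∏ x : Fin n, (N x / Dn x) := by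
      rw [hF, Finset.prod_div_distrib, Finset.prod_div_distrib]
      congr 1
      · rw [← Fin.prod_univ_eq_prod_range (fun m => N (m:Fin n))]
        apply Finset.prod_congr rfl
        intro x _
        rw [Fin.cast_val_eq_self]
      · rw [← Fin.prod_univ_eq_prod_range (fun m => Dn ((m:Fin n)+1))]
        rw [← Equiv.prod_comp (Equiv.addRight (1 : Fin n)) Dn]
        apply Finset.prod_congr rfl
        intro x _
        rw [Fin.cast_val_eq_self]
        rfl
    have factor_pos : ∀ x : Fin n, 0 < N x / Dn x := by
      intro x
      apply div_pos
      · simp only [hN]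
        have := cw_pos hp (i + x); have := cw_pos hp (j + x)
        positivity
      · simp only [hDn]
        have := hp (i + x); have := hp (j + x)
        positivity
    have factor_eq : ∀ x : Fin n, N x / Dn x =
        2 * Real.sqrt ((p (i+x))⁻¹) * Real.sqrt ((p (j+x))⁻¹) / ((p (i+x))⁻¹ + (p (j+x))⁻¹) := by
      intro x
      simp only [hN, hDn, cw, Real.sqrt_inv]
    have factor_le : ∀ x : Fin n, N x / Dn x ≤ 1 := by
      intro x
      rw [factor_eq x]
      exact amgm_le _ _ (by have := hp (i+x); positivity) (by have := hp (j+x); positivity)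
    have factor_lt : N (x₀ - i) / Dn (x₀ - i) < 1 := by
      rw [factor_eq]
      apply amgm_lt _ _ (by have := hp (i+(x₀-i)); positivity) (by have := hp (j+(x₀-i)); positivity)
      have e3 : i + (x₀ - i) = x₀ := by abel
      have e4 : j + (x₀ - i) = x₀ + d := by rw [hdd]; abel
      rw [e3, e4]
      intro hcon
      exact hx₀ (by rw [_root_.inv_inj] at hcon; rw [hcon])
    have hFlt : F < 1 := by
      rw [hF2]
      calc ∏ x : Fin n, (N x / Dn x) < ∏ _x : Fin n, (1:ℝ) := by
            apply Finset.prod_lt_prod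
            · intro x _; exact factor_pos x
            · intro x _; exact factor_le x
            · exact ⟨x₀ - i, Finset.mem_univ _, factor_lt⟩
        _ = 1 := Finset.prod_const_one
    have hFne : ((F:ℝ):ℂ) ≠ 1 := by
      intro hcon
      rw [Complex.ofReal_eq_one] at hcon
      exact absurd hcon hFlt.ne
    have : g 0 = ((F:ℝ):ℂ) * g 0 := by
      conv_lhs => rw [← hgn, prodf n]
    have hmain : (1 - ((F:ℝ):ℂ)) * g 0 = 0 := by
      linear_combination this
    have hzero : g 0 = 0 := by
      rcases mul_eq_zero.mp hmain with h | h
      · exact absurd (sub_eq_zero.mp h).symm hFne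
      · exact h
    have h5 : σ (i + ((0:ℕ):Fin n)) (j + ((0:ℕ):Fin n)) = 0 := hzero
    simpa using h5
  ext a b
  by_cases hab : a = b
  · subst hab
    rw [hdiag a, diagonal_apply_eq]
  · rw [hoff a b hab, diagonal_apply_ne _ hab]
end core3

section core4
variable {n : ℕ} [NeZero n] {p : Fin n → ℝ}
set_option linter.unusedSectionVars false

theorem core_indec (hp : ∀ i, 0 < p i) (hmono : Monotone p)
    (hnc : ¬ ∀ k, p k = p 0) : Indecomposable (HH p) := by
  intro P hH hPP hcomm
  -- P commutes with (HH p)ᴴ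
  have hcommT : P * (HH p)ᴴ = (HH p)ᴴ * P := by
    have := congrArg conjTranspose hcomm
    rw [conjTranspose_mul, conjTranspose_mul, ← hH] at this
    exact this.symm
  -- P commutes with the diagonal matrix (HH p)ᴴ * HH p
  have hdiagcomm : P * ((HH p)ᴴ * HH p) = ((HH p)ᴴ * HH p) * P := by
    calc P * ((HH p)ᴴ * HH p) = (P * (HH p)ᴴ) * HH p := by rw [Matrix.mul_assoc]
    _ = (HH p)ᴴ * (P * HH p) := by rw [hcommT, Matrix.mul_assoc]
    _ = (HH p)ᴴ * (HH p * P) := by rw [hcomm]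
    _ = ((HH p)ᴴ * HH p) * P := by rw [Matrix.mul_assoc]
  -- entrywise: P a b ≠ 0 → p a = p b
  have hdz : ∀ a b : Fin n, P a b ≠ 0 → p a = p b := by
    intro a b hab
    have := congrFun (congrFun hdiagcomm a) b
    rw [HHT_mul_HH hp] at this
    rw [mul_diagonal, diagonal_mul] at this
    have h2 : P a b * ((((p b)⁻¹:ℝ):ℂ) - (((p a)⁻¹:ℝ):ℂ)) = 0 := by linear_combination this
    rcases mul_eq_zero.mp h2 with h | h
    · exact absurd h hab
    · have h3 : ((p b)⁻¹:ℝ) = (p a)⁻¹ := by exact_mod_cast sub_eq_zero.mp h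
      exact (_root_.inv_inj.mp h3).symm
  -- shift relation
  have hshift : ∀ a b : Fin n, P (a+1) (b+1) * (cw p b : ℂ) = (cw p a : ℂ) * P a b := by
    intro a b
    have h1 := congrFun (congrFun hcomm (a+1)) b
    rw [HH_mul_apply] at h1
    -- (P * HH p) (a+1) b = P (a+1) (b+1) * cw p b
    have h2 : (P * HH p) (a+1) b = P (a+1) (b+1) * (cw p b : ℂ) := by
      rw [mul_apply, Finset.sum_eq_single (b+1)]
      · simp [HH]
      · intro c _ hc
        simp [HH, hc]
      · simp
    rw [h2] at h1
    exact h1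
  -- P a b ≠ 0 → P (a + x) (b + x) ≠ 0 for all x
  have hprop : ∀ a b : Fin n, P a b ≠ 0 → ∀ x : Fin n, P (a + x) (b + x) ≠ 0 := by
    intro a b hab x
    have hm : ∀ m : ℕ, P (a + (m : Fin n)) (b + (m : Fin n)) ≠ 0 := by
      intro m
      induction m with
      | zero => simpa using hab
      | succ m ih =>
        have := hshift (a + (m : Fin n)) (b + (m : Fin n))
        rw [Nat.cast_succ, ← add_assoc, ← add_assoc]
        intro hz
        rw [hz, zero_mul] at this
        have hc := cw_pos hp (a + (m : Fin n))
        have : P (a + (m:Fin n)) (b + (m:Fin n)) = 0 := by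
          have hcne : ((cw p (a + (m:Fin n)) : ℝ):ℂ) ≠ 0 := Complex.ofReal_ne_zero.2 hc.ne'
          field_simp at this
          exact (mul_eq_zero.1 this.symm).resolve_left hcne
        exact ih this
    have := hm x.val
    rwa [Fin.cast_val_eq_self] at this
  -- off-diagonal entries vanish
  have hoff : ∀ a b : Fin n, a ≠ b → P a b = 0 := by
    intro a b hab
    by_contra hz
    have hdne : b - a ≠ 0 := sub_ne_zero.2 (Ne.symm hab)
    apply hnc
    apply aperiodic hmono (b - a) _ hdne
    intro k
    have h1 := hprop a b hz (k - a)
    have e1 : a + (k - a) = k := by abel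
    have e2 : b + (k - a) = k + (b - a) := by abel
    rw [e1, e2] at h1
    exact (hdz _ _ h1).symm
  -- diagonal is constant
  have hdiagc : ∀ k : Fin n, P k k = P 0 0 := by
    have hstep : ∀ i : Fin n, P (i+1) (i+1) = P i i := by
      intro i
      have := hshift i i
      have hcne : ((cw p i : ℝ):ℂ) ≠ 0 := Complex.ofReal_ne_zero.2 (cw_pos hp i).ne'
      rw [mul_comm (((cw p i : ℝ)):ℂ) (P i i)] at this
      exact mul_right_cancel₀ hcne this
    have hm : ∀ m : ℕ, P ((m:Fin n)) ((m:Fin n)) = P 0 0 := by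
      intro m
      induction m with
      | zero => norm_num
      | succ m ih => rw [Nat.cast_succ, hstep]; exact ih
    intro k
    have := hm k.val
    rwa [Fin.cast_val_eq_self] at this
  -- P = λ • 1 with λ² = λ
  have hsq : P 0 0 * P 0 0 = P 0 0 := by
    have := congrFun (congrFun hPP 0) 0
    rw [mul_apply] at this
    rw [Finset.sum_eq_single 0] at this
    · exact this
    · intro b _ hb
      rw [hoff 0 b (Ne.symm hb), zero_mul]
    · simp
  have hfac : P 0 0 * (P 0 0 - 1) = 0 := by linear_combination hsq
  have hcases : P 0 0 = 0 ∨ P 0 0 = 1 := by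
    rcases mul_eq_zero.mp hfac with h | h
    · exact Or.inl h
    · exact Or.inr (by linear_combination h)
  rcases hcases with h0 | h1
  · left
    ext a b
    by_cases hab : a = b
    · subst hab; rw [hdiagc a, h0]; rfl
    · rw [hoff a b hab]; rfl
  · right
    ext a b
    by_cases hab : a = b
    · subst hab; rw [hdiagc a, h1, one_apply_eq]
    · rw [hoff a b hab, one_apply_ne hab]
end core4

section conj
variable {n : ℕ}

lemma sandwich1 {U : Matrix (Fin n) (Fin n) ℂ} (hU : Uᴴ * U = 1) (hU2 : U * Uᴴ = 1)
    (X : Matrix (Fin n) (Fin n) ℂ) : U * (Uᴴ * X * U) * Uᴴ = X := by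
  calc U * (Uᴴ * X * U) * Uᴴ = (U * Uᴴ) * X * (U * Uᴴ) := by
        simp only [Matrix.mul_assoc]
  _ = X := by rw [hU2, Matrix.one_mul, Matrix.mul_one]

lemma sandwich2 {U : Matrix (Fin n) (Fin n) ℂ} (hU : Uᴴ * U = 1) (hU2 : U * Uᴴ = 1)
    (X : Matrix (Fin n) (Fin n) ℂ) : Uᴴ * (U * X * Uᴴ) * U = X := by
  calc Uᴴ * (U * X * Uᴴ) * U = (Uᴴ * U) * X * (Uᴴ * U) := by
        simp only [Matrix.mul_assoc]
  _ = X := by rw [hU, Matrix.one_mul, Matrix.mul_one]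

lemma lind_conj {U : Matrix (Fin n) (Fin n) ℂ} (hU : Uᴴ * U = 1) (hU2 : U * Uᴴ = 1)
    (h σ : Matrix (Fin n) (Fin n) ℂ) :
    lindblad (U * h * Uᴴ) σ = U * lindblad h (Uᴴ * σ * U) * Uᴴ := by
  have hcan : ∀ X : Matrix (Fin n) (Fin n) ℂ, Uᴴ * (U * X) = X := by
    intro X; rw [← Matrix.mul_assoc, hU, Matrix.one_mul]
  have hcan2 : ∀ X : Matrix (Fin n) (Fin n) ℂ, U * (Uᴴ * X) = X := by
    intro X; rw [← Matrix.mul_assoc, hU2, Matrix.one_mul]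
  simp only [lindblad, conjTranspose_mul, conjTranspose_conjTranspose,
    Matrix.mul_sub, Matrix.sub_mul, Matrix.mul_add, Matrix.add_mul,
    Matrix.mul_smul, Matrix.smul_mul, Matrix.mul_assoc, hcan, hcan2, hU, hU2,
    Matrix.mul_one]

lemma conj_eq_zero {U : Matrix (Fin n) (Fin n) ℂ} (hU : Uᴴ * U = 1) (hU2 : U * Uᴴ = 1)
    {X : Matrix (Fin n) (Fin n) ℂ} : U * X * Uᴴ = 0 ↔ X = 0 := by
  constructor
  · intro h
    have h2 : Uᴴ * (U * X * Uᴴ) * U = Uᴴ * 0 * U := by rw [h]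
    rw [sandwich2 hU hU2] at h2
    rw [h2, Matrix.mul_zero, Matrix.zero_mul]
  · intro h
    rw [h, Matrix.mul_zero, Matrix.zero_mul]

lemma indec_conj {U : Matrix (Fin n) (Fin n) ℂ} (hU : Uᴴ * U = 1) (hU2 : U * Uᴴ = 1)
    {h : Matrix (Fin n) (Fin n) ℂ} (hh : Indecomposable h) :
    Indecomposable (U * h * Uᴴ) := by
  intro P hH hPP hcomm
  have hQH : (Uᴴ * P * U) = (Uᴴ * P * U)ᴴ := by
    rw [conjTranspose_mul, conjTranspose_mul, conjTranspose_conjTranspose, ← hH,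
      Matrix.mul_assoc]
  have hQP : (Uᴴ * P * U) * (Uᴴ * P * U) = Uᴴ * P * U := by
    calc (Uᴴ * P * U) * (Uᴴ * P * U) = Uᴴ * (P * (U * Uᴴ) * P) * U := by
          simp only [Matrix.mul_assoc]
    _ = Uᴴ * (P * P) * U := by rw [hU2, Matrix.mul_one]
    _ = Uᴴ * P * U := by rw [hPP, Matrix.mul_assoc]
  have hQC : (Uᴴ * P * U) * h = h * (Uᴴ * P * U) := by
    have h1 := congrArg (fun Y => Uᴴ * Y * U) hcomm
    try simp only at h1
    have key0 : U * h * Uᴴ * U = U * h := by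
      rw [Matrix.mul_assoc (U * h) Uᴴ U, hU, Matrix.mul_one]
    calc (Uᴴ * P * U) * h = Uᴴ * P * (U * h) := by rw [Matrix.mul_assoc]
    _ = Uᴴ * P * (U * h * Uᴴ * U) := by rw [key0]
    _ = Uᴴ * (P * (U * h * Uᴴ)) * U := by simp only [Matrix.mul_assoc]
    _ = Uᴴ * ((U * h * Uᴴ) * P) * U := by rw [hcomm]
    _ = Uᴴ * U * (h * (Uᴴ * (P * U))) := by simp only [Matrix.mul_assoc]
    _ = h * (Uᴴ * (P * U)) := by rw [hU, Matrix.one_mul]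
    _ = h * (Uᴴ * P * U) := by rw [Matrix.mul_assoc]
  rcases hh (Uᴴ * P * U) hQH hQP hQC with h0 | h1
  · left
    have := congrArg (fun Y => U * Y * Uᴴ) h0
    try simp only at this
    rw [sandwich1 hU hU2] at this
    rw [this, Matrix.mul_zero, Matrix.zero_mul]
  · right
    have := congrArg (fun Y => U * Y * Uᴴ) h1
    try simp only at this
    rw [sandwich1 hU hU2] at this
    rw [this, Matrix.mul_one, hU2]
end conj

/-- Construction of a simple evolution leading to a given faithful state. -/
theorem stmt15 {n : ℕ} (ρ : Matrix (Fin n) (Fin n) ℂ)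
    (hρ : ρ.PosDef) (htr : ρ.trace = 1)
    (hne : ρ ≠ ((n : ℂ))⁻¹ • (1 : Matrix (Fin n) (Fin n) ℂ)) :
    ∃ h : Matrix (Fin n) (Fin n) ℂ, Indecomposable h ∧
      ∀ σ : Matrix (Fin n) (Fin n) ℂ, σ.PosSemidef → σ.trace = 1 →
        (lindblad h σ = 0 ↔ σ = ρ) := by
  rcases Nat.eq_zero_or_pos n with hn | hn
  · exfalso
    subst hn
    rw [Matrix.trace] at htr
    simp at htr
  haveI : NeZero n := ⟨hn.ne'⟩
  have hherm : ρ.IsHermitian := hρ.1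
  set ev : Fin n → ℝ := hherm.eigenvalues with hev
  set τ : Equiv.Perm (Fin n) := Tuple.sort ev with hτ
  set p : Fin n → ℝ := ev ∘ τ with hpdef
  set U0 : Matrix (Fin n) (Fin n) ℂ := (hherm.eigenvectorUnitary : Matrix (Fin n) (Fin n) ℂ) with hU0def
  set U : Matrix (Fin n) (Fin n) ℂ := U0.submatrix id τ with hUdef
  -- unitarity
  have hU00 : U0ᴴ * U0 = 1 := by
    have := hherm.eigenvectorUnitary.2
    rw [Matrix.mem_unitaryGroup_iff'] at this
    rw [← Matrix.star_eq_conjTranspose]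
    exact this
  have hU : Uᴴ * U = 1 := by
    ext i j
    have h1 := congrFun (congrFun hU00 (τ i)) (τ j)
    rw [mul_apply] at h1
    rw [mul_apply]
    have h2 : ∀ k, Uᴴ i k * U k j = U0ᴴ (τ i) k * U0 k (τ j) := by
      intro k
      simp [hUdef, conjTranspose_apply, Matrix.submatrix_apply]
    simp_rw [h2]
    rw [h1]
    by_cases hij : i = j
    · subst hij; simp
    · rw [one_apply_ne hij, one_apply_ne (fun hc => hij (τ.injective hc))]
  have hU2 : U * Uᴴ = 1 := mul_eq_one_comm.mp hU
  -- spectral decomposition with sorted eigenvalues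
  have hspec0 := hherm.spectral_theorem
  have hentry : ∀ (V : Matrix (Fin n) (Fin n) ℂ) (d : Fin n → ℂ) (i j : Fin n),
      (V * diagonal d * Vᴴ) i j = ∑ k, V i k * d k * star (V j k) := by
    intro V d i j
    rw [mul_apply]
    apply Finset.sum_congr rfl
    intro k _
    rw [mul_diagonal, conjTranspose_apply]
  have hspec : ρ = U * diagonal (fun i => ((p i : ℝ) : ℂ)) * Uᴴ := by
    ext i j
    have h1 : ρ i j = (U0 * diagonal ((RCLike.ofReal : ℝ → ℂ) ∘ ev) * U0ᴴ) i j := by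
      conv_lhs => rw [hspec0]
      rw [Unitary.conjStarAlgAut_apply, Matrix.star_eq_conjTranspose]
    have h2 : (∑ k, U i k * ((p k : ℝ):ℂ) * star (U j k))
        = ∑ k, U0 i k * ((ev k : ℝ):ℂ) * star (U0 j k) := by
      rw [← Equiv.sum_comp τ (fun m => U0 i m * ((ev m : ℝ):ℂ) * star (U0 j m))]
      apply Finset.sum_congr rfl
      intro k _
      simp [hUdef, hpdef]
    rw [h1, hentry, hentry, h2]
    apply Finset.sum_congr rfl
    intro k _
    norm_num [Function.comp]
  -- positivity, monotonicity, sum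
  have hp : ∀ i, 0 < p i := fun i => hρ.eigenvalues_pos (τ i)
  have hmono : Monotone p := Tuple.monotone_sort ev
  have hsum : ∑ i, p i = 1 := by
    have h1 : ρ.trace = ∑ i, ((p i : ℝ) : ℂ) := by
      rw [hspec, Matrix.trace_mul_cycle, hU, Matrix.one_mul, Matrix.trace_diagonal]
    rw [htr] at h1
    have h2 : ((∑ i, p i : ℝ) : ℂ) = 1 := by
      push_cast
      rw [← h1]
    exact_mod_cast h2
  -- nonconstancy
  have hnc : ¬ ∀ k, p k = p 0 := by
    intro hall
    apply hne
    have hp0 : p 0 = (n : ℝ)⁻¹ := by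
      have h1 : ∑ i, p i = (n : ℝ) * p 0 := by
        rw [Finset.sum_congr rfl (fun i _ => hall i)]
        rw [Finset.sum_const, Finset.card_univ, Fintype.card_fin, nsmul_eq_mul]
      rw [hsum] at h1
      have hn0 : (n:ℝ) ≠ 0 := Nat.cast_ne_zero.2 hn.ne'
      field_simp
      linear_combination -h1
    have hdiag1 : diagonal (fun i => ((p i : ℝ) : ℂ)) = ((n : ℂ))⁻¹ • 1 := by
      ext a b
      by_cases hab : a = b
      · subst hab
        rw [diagonal_apply_eq, hall a, hp0, Matrix.smul_apply, one_apply_eq, smul_eq_mul,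
          mul_one]
        push_cast
        ring
      · rw [diagonal_apply_ne _ hab, Matrix.smul_apply, one_apply_ne hab, smul_eq_mul, mul_zero]
    rw [hspec, hdiag1, Matrix.mul_smul, Matrix.smul_mul, Matrix.mul_one, hU2]
  -- the evolution operator
  refine ⟨U * HH p * Uᴴ, indec_conj hU hU2 (core_indec hp hmono hnc), ?_⟩
  intro σ hψ htσ
  rw [lind_conj hU hU2, conj_eq_zero hU hU2]
  have htσ' : (Uᴴ * σ * U).trace = 1 := by
    rw [Matrix.trace_mul_cycle, hU2, Matrix.one_mul, htσ]
  constructor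
  · intro h0
    have := core_unique hp hmono hsum hnc _ htσ' h0
    have h2 : U * (Uᴴ * σ * U) * Uᴴ = U * diagonal (fun i => ((p i : ℝ) : ℂ)) * Uᴴ := by
      rw [this]
    rw [sandwich1 hU hU2] at h2
    rw [h2, ← hspec]
  · intro h
    rw [h, hspec, sandwich2 hU hU2]
    exact lind_diag_zero hp
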